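/- Let R be a ring and let (Mᵢ)_{i ∈ ι} be a family of R-modules indexed by a finite type ι. If each Mᵢ is subprojective extension-reflecting (sp.e.r.), then the direct sum ⊕ᵢ Mᵢ is sp.e.r. -/

import Mathlib

universe u

/-- `IsSubinjective R B A` means: the `R`-module `B` is `A`-subinjective, i.e. for every
`R`-module `C`, every injective `R`-linear map `i : A → C` and every `R`-linear map
`f : A → B`, there is an `R`-linear map `g : C → B` with `g ∘ i = f`. -/
def IsSubinjective (R : Type u) [Ring R] (B : Type u) [AddCommGroup B] [Module R B]
    (A : Type u) [AddCommGroup A] [Module R A] : Prop :=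
  ∀ (C : Type u) [AddCommGroup C] [Module R C] (i : A →ₗ[R] C),
    Function.Injective i → ∀ f : A →ₗ[R] B, ∃ g : C →ₗ[R] B, g ∘ₗ i = f

/-- `IsSubprojective R B A` means: the `R`-module `B` is `A`-subprojective, i.e. for every
`R`-module `C`, every surjective `R`-linear map `g : C → A` and every `R`-linear map
`f : B → A`, there is an `R`-linear map `h : B → C` with `g ∘ h = f`. -/
def IsSubprojective (R : Type u) [Ring R] (B : Type u) [AddCommGroup B] [Module R B]
    (A : Type u) [AddCommGroup A] [Module R A] : Prop :=
  ∀ (C : Type u) [AddCommGroup C] [Module R C] (g : C →ₗ[R] A),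
    Function.Surjective g → ∀ f : B →ₗ[R] A, ∃ h : B →ₗ[R] C, g ∘ₗ h = f

/-- `M` is subinjective extension-reflecting (si.e.r.): for every short exact sequence
`0 → A → B → C → 0`, if `A` and `C` are `M`-subinjective, then so is `B`. -/
def IsSIER (R : Type u) [Ring R] (M : Type u) [AddCommGroup M] [Module R M] : Prop :=
  ∀ (A B C : Type u) [AddCommGroup A] [Module R A] [AddCommGroup B] [Module R B]
    [AddCommGroup C] [Module R C] (f : A →ₗ[R] B) (g : B →ₗ[R] C),
    Function.Injective f → Function.Surjective g → Function.Exact f g →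
    IsSubinjective R A M → IsSubinjective R C M → IsSubinjective R B M

/-- `M` is subprojective extension-reflecting (sp.e.r.): for every short exact sequence
`0 → A → B → C → 0`, if `A` and `C` are `M`-subprojective, then so is `B`. -/
def IsSPER (R : Type u) [Ring R] (M : Type u) [AddCommGroup M] [Module R M] : Prop :=
  ∀ (A B C : Type u) [AddCommGroup A] [Module R A] [AddCommGroup B] [Module R B]
    [AddCommGroup C] [Module R C] (f : A →ₗ[R] B) (g : B →ₗ[R] C),
    Function.Injective f → Function.Surjective g → Function.Exact f g →
    IsSubprojective R A M → IsSubprojective R C M → IsSubprojective R B M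

open DirectSum

theorem subproj_of_directSum (R : Type u) [Ring R] (ι : Type u) [DecidableEq ι]
    (M : ι → Type u) [∀ i, AddCommGroup (M i)] [∀ i, Module R (M i)]
    (X : Type u) [AddCommGroup X] [Module R X]
    (hX : IsSubprojective R X (⨁ i, M i)) (j : ι) : IsSubprojective R X (M j) := by
  intro D _ _ g hg f
  -- surjection g' : D × ⨁M → ⨁M
  set π := DirectSum.component R ι M j
  set l := DirectSum.lof R ι M j
  let g' : (D × ⨁ i, M i) →ₗ[R] ⨁ i, M i :=
    (LinearMap.snd R D (⨁ i, M i)) - l ∘ₗ π ∘ₗ (LinearMap.snd R D (⨁ i, M i))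
      + l ∘ₗ g ∘ₗ (LinearMap.fst R D (⨁ i, M i))
  have hg' : Function.Surjective g' := by
    intro m
    obtain ⟨d, hd⟩ := hg (π m)
    refine ⟨(d, m), ?_⟩
    simp [g', hd]
  obtain ⟨h', hh'⟩ := hX (D × ⨁ i, M i) g' hg' (l ∘ₗ f)
  refine ⟨(LinearMap.fst R D (⨁ i, M i)) ∘ₗ h', ?_⟩
  ext x
  have := congrArg (fun φ => π (φ x)) hh'
  simpa [g', π, l, DirectSum.component.lof_self] using this

theorem directSum_subproj (R : Type u) [Ring R] (ι : Type u) [Finite ι] [DecidableEq ι]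
    (M : ι → Type u) [∀ i, AddCommGroup (M i)] [∀ i, Module R (M i)]
    (X : Type u) [AddCommGroup X] [Module R X]
    (hX : ∀ i, IsSubprojective R X (M i)) : IsSubprojective R X (⨁ i, M i) := by
  have := Fintype.ofFinite ι
  intro D _ _ g hg f
  -- for each i, restrict to preimage of the i-th summand
  have key : ∀ i : ι, ∃ h : X →ₗ[R] D,
      (∀ x, g (h x) ∈ LinearMap.range (DirectSum.lof R ι M i)) ∧
      ∀ x, DirectSum.component R ι M i (g (h x)) = DirectSum.component R ι M i (f x) := by
    intro i
    let Ci : Submodule R D := Submodule.comap g (LinearMap.range (DirectSum.lof R ι M i))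
    let ε : Ci →ₗ[R] M i := (DirectSum.component R ι M i) ∘ₗ g ∘ₗ Ci.subtype
    have hε : Function.Surjective ε := by
      intro m
      obtain ⟨d, hd⟩ := hg (DirectSum.lof R ι M i m)
      refine ⟨⟨d, by simp [Ci, hd]⟩, ?_⟩
      simp [ε, hd, DirectSum.component.lof_self]
    obtain ⟨h, hh⟩ := hX i Ci ε hε ((DirectSum.component R ι M i) ∘ₗ f)
    refine ⟨Ci.subtype ∘ₗ h, fun x => (h x).2, fun x => ?_⟩
    exact congrArg (fun φ => φ x) hh
  choose h hmem hcomp using key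
  refine ⟨∑ i : ι, h i, ?_⟩
  ext x
  rename_i j
  have : g ((∑ i : ι, h i) x) = ∑ i : ι, g (h i x) := by
    simp [LinearMap.sum_apply, map_sum]
  rw [LinearMap.comp_apply, this]
  have hj : ∀ i : ι, (DirectSum.component R ι M j) (g (h i x)) =
      if i = j then (DirectSum.component R ι M j) (f x) else 0 := by
    intro i
    by_cases hij : i = j
    · subst hij; simp [hcomp i x]
    · obtain ⟨m, hm⟩ := hmem i x
      rw [← hm]
      simp [DirectSum.component.of, hij]
  calc (∑ i : ι, g (h i x)) j = ∑ i : ι, (DirectSum.component R ι M j) (g (h i x)) := by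
        rw [DFinsupp.finset_sum_apply]; rfl
    _ = (DirectSum.component R ι M j) (f x) := by
        rw [Finset.sum_congr rfl fun i _ => hj i]; simp
    _ = (f x) j := rfl

open DirectSum in
/-- A finite direct sum of sp.e.r. modules is sp.e.r. -/
theorem directSum_isSPER (R : Type u) [Ring R] (ι : Type u) [Finite ι]
    (M : ι → Type u) [∀ i, AddCommGroup (M i)] [∀ i, Module R (M i)]
    (h : ∀ i, IsSPER R (M i)) :
    IsSPER R (⨁ i, M i) := by
  classical
  intro A B C _ _ _ _ _ _ φ ψ hφ hψ hex hA hC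
  have hB : ∀ i, IsSubprojective R B (M i) := fun i =>
    h i A B C φ ψ hφ hψ hex
      (subproj_of_directSum R ι M A hA i)
      (subproj_of_directSum R ι M C hC i)
  exact directSum_subproj R ι M B hB
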